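/- Let d ≥ 2 and let k ≥ 3 be an integer. For each pair 1 ≤ i < j ≤ d let ψ_{ij} ∈ L²(S^d) with respect to the surface measure on S^d ⊂ ℝ^{d+1}. Write θ = (w,b) ∈ ℝ^d × ℝ for points of S^d, x̃ = (x,1), and define for each θ the vector field Φ_{θ,ij}(x) = k·σ_{k−1}(θ·x̃)·(w_j e_i − w_i e_j). Then the vector field u(x) = ∫_{S^d} Σ_{1≤i<j≤d} Φ_{θ,ij}(x) ψ_{ij}(θ) dθ is continuously differentiable on ℝ^d and divergence-free: Σ_{p=1}^d ∂_p u_p(x) = 0 for every x ∈ ℝ^d. -/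

import Mathlib

set_option maxHeartbeats 1000000

open MeasureTheory RealInnerProductSpace Finset

open Asymptotics in
lemma hasDerivAt_relupow (m : ℕ) (hm : 1 ≤ m) (t : ℝ) :
    HasDerivAt (fun s : ℝ => max s 0 ^ (m + 1)) ((m + 1 : ℝ) * max t 0 ^ m) t := by
  have hm0 : m ≠ 0 := by omega
  rcases lt_trichotomy t 0 with h | h | h
  · have hc : HasDerivAt (fun _ : ℝ => (0 : ℝ)) 0 t := hasDerivAt_const _ _
    have heq : (fun s : ℝ => max s 0 ^ (m + 1)) =ᶠ[nhds t] fun _ => (0 : ℝ) := by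
      filter_upwards [Iio_mem_nhds h] with s hs
      simp [max_eq_right (Set.mem_Iio.mp hs).le]
    have := hc.congr_of_eventuallyEq heq
    rw [show ((m + 1 : ℝ) * max t 0 ^ m) = 0 by simp [max_eq_right h.le, zero_pow hm0]]
    exact this
  · subst h
    rw [hasDerivAt_iff_isLittleO]
    have hsimp : ∀ s : ℝ, max s 0 ^ (m + 1) - max (0:ℝ) 0 ^ (m + 1)
        - (s - 0) • ((m + 1 : ℝ) * max (0:ℝ) 0 ^ m) = max s 0 ^ (m + 1) := by
      intro s; simp [zero_pow hm0]
    simp only [hsimp]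
    have h1 : (fun s : ℝ => max s 0 ^ (m + 1)) =O[nhds 0] fun s => s ^ (m + 1) := by
      apply isBigO_of_le
      intro s
      rw [norm_pow, norm_pow]
      gcongr
      rcases le_or_gt s 0 with hs | hs
      · simp [max_eq_right hs]
      · rw [max_eq_left hs.le]
    have h2 : (fun s : ℝ => s ^ (m + 1)) =o[nhds 0] fun s => s ^ 1 :=
      isLittleO_pow_pow (by omega)
    have := h1.trans_isLittleO h2
    simpa using this
  · have hp : HasDerivAt (fun s : ℝ => s ^ (m + 1)) ((m + 1 : ℝ) * t ^ m) t := by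
      simpa using hasDerivAt_pow (m + 1) t
    have heq : (fun s : ℝ => max s 0 ^ (m + 1)) =ᶠ[nhds t] fun s => s ^ (m + 1) := by
      filter_upwards [Ioi_mem_nhds h] with s hs
      rw [max_eq_left (Set.mem_Ioi.mp hs).le]
    have := hp.congr_of_eventuallyEq heq
    rw [max_eq_left h.le]
    exact this

lemma abs_coord_le_norm {n : ℕ} (x : EuclideanSpace ℝ (Fin n)) (i : Fin n) :
    |x i| ≤ ‖x‖ := by
  have := abs_real_inner_le_norm x (EuclideanSpace.single i (1 : ℝ))
  rw [EuclideanSpace.inner_single_right] at this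
  simpa [EuclideanSpace.norm_single] using this

/-- For `k ≥ 3` and densities `ψ_(ij) ∈ L²(S^d)`, the field
`u(x) = ∫_(S^d) ∑_(i<j) Φ_(θ,ij)(x) ψ_(ij)(θ) dθ`, with
`Φ_(θ,ij)(x) = k σ_(k-1)(θ·x̃)(w_j e_i − w_i e_j)`, is `C¹` and divergence-free on `ℝ^d`. -/
theorem sphere_integral_divfree_field
    (d k : ℕ) (hd : 2 ≤ d) (hk : 3 ≤ k)
    (μ : Measure (Metric.sphere (0 : EuclideanSpace ℝ (Fin (d + 1))) 1))
    (hμ : μ = (volume : Measure (EuclideanSpace ℝ (Fin (d + 1)))).toSphere)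
    (ψ : Fin d → Fin d → Metric.sphere (0 : EuclideanSpace ℝ (Fin (d + 1))) 1 → ℝ)
    (hψ : ∀ i j, i < j → MemLp (ψ i j) 2 μ)
    (xt : EuclideanSpace ℝ (Fin d) → EuclideanSpace ℝ (Fin (d + 1)))
    (hxt : ∀ x, ∀ i : Fin (d + 1), xt x i = if h : (i : ℕ) < d then x ⟨i, h⟩ else 1)
    (wpart : Metric.sphere (0 : EuclideanSpace ℝ (Fin (d + 1))) 1 → EuclideanSpace ℝ (Fin d))
    (hwpart : ∀ θ, ∀ i : Fin d, wpart θ i = θ.1 (Fin.castSucc i))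
    (Φ : Metric.sphere (0 : EuclideanSpace ℝ (Fin (d + 1))) 1 → Fin d → Fin d →
      EuclideanSpace ℝ (Fin d) → EuclideanSpace ℝ (Fin d))
    (hΦ : ∀ θ i j x, Φ θ i j x =
      ((k : ℝ) * max ⟪θ.1, xt x⟫ 0 ^ (k - 1)) •
        (wpart θ j • EuclideanSpace.single i (1 : ℝ) -
          wpart θ i • EuclideanSpace.single j (1 : ℝ)))
    (u : EuclideanSpace ℝ (Fin d) → EuclideanSpace ℝ (Fin d))
    (hu : ∀ x, u x = ∫ θ, ∑ i, ∑ j ∈ univ.filter (fun j => i < j), ψ i j θ • Φ θ i j x ∂μ) :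
    ContDiff ℝ 1 u ∧
      ∀ x, ∑ p, fderiv ℝ (fun y => u y p) x (EuclideanSpace.single p 1) = 0 := by
  haveI hfin : IsFiniteMeasure μ := by rw [hμ]; infer_instance
  -- basic quantities
  set n : ℕ := k - 2 with hn
  have hn1 : 1 ≤ n := by omega
  have hk1 : k - 1 = n + 1 := by omega
  set ℓ : (Metric.sphere (0 : EuclideanSpace ℝ (Fin (d + 1))) 1) → (EuclideanSpace ℝ (Fin d)) → ℝ := fun θ x => ⟪wpart θ, x⟫ + θ.1 (Fin.last d) with hℓ
  have hip : ∀ (θ : (Metric.sphere (0 : EuclideanSpace ℝ (Fin (d + 1))) 1)) (x : (EuclideanSpace ℝ (Fin d))), ⟪θ.1, xt x⟫ = ℓ θ x := by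
    intro θ x
    simp only [hℓ]
    simp only [PiLp.inner_apply, RCLike.inner_apply, conj_trivial]
    rw [Fin.sum_univ_castSucc]
    congr 1
    · refine Finset.sum_congr rfl fun i _ => ?_
      rw [hwpart, hxt]
      have hi : ((Fin.castSucc i : Fin (d + 1)) : ℕ) < d := by simpa using i.2
      rw [dif_pos hi]
      congr 1
    · rw [hxt, dif_neg (by simp), one_mul]
  set c : (Metric.sphere (0 : EuclideanSpace ℝ (Fin (d + 1))) 1) → (EuclideanSpace ℝ (Fin d)) := fun θ => ∑ i, ∑ j ∈ univ.filter (fun j => i < j),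
      ψ i j θ • (wpart θ j • EuclideanSpace.single i (1 : ℝ) -
        wpart θ i • EuclideanSpace.single j (1 : ℝ)) with hc
  set F : (Metric.sphere (0 : EuclideanSpace ℝ (Fin (d + 1))) 1) → (EuclideanSpace ℝ (Fin d)) → (EuclideanSpace ℝ (Fin d)) := fun θ x => ((k : ℝ) * max (ℓ θ x) 0 ^ (k - 1)) • c θ with hF
  have hu' : ∀ x, u x = ∫ θ, F θ x ∂μ := by
    intro x
    rw [hu]
    congr 1
    funext θ
    simp only [hΦ, hip, hF, hc, Finset.smul_sum]
    refine Finset.sum_congr rfl fun i _ => Finset.sum_congr rfl fun j _ => ?_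
    rw [smul_comm]
  -- norm bounds
  have hθnorm : ∀ θ : (Metric.sphere (0 : EuclideanSpace ℝ (Fin (d + 1))) 1), ‖θ.1‖ = 1 := fun θ => by
    simpa using mem_sphere_zero_iff_norm.mp θ.2
  have hwnorm : ∀ θ : (Metric.sphere (0 : EuclideanSpace ℝ (Fin (d + 1))) 1), ‖wpart θ‖ ≤ 1 := by
    intro θ
    rw [← hθnorm θ, EuclideanSpace.norm_eq, EuclideanSpace.norm_eq]
    apply Real.sqrt_le_sqrt
    rw [Fin.sum_univ_castSucc]
    have h1 : ∑ i : Fin d, ‖wpart θ i‖ ^ 2 = ∑ i : Fin d, ‖θ.1 (Fin.castSucc i)‖ ^ 2 :=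
      Finset.sum_congr rfl fun i _ => by rw [hwpart]
    rw [h1]
    exact le_add_of_nonneg_right (by positivity)
  have hwabs : ∀ (θ : (Metric.sphere (0 : EuclideanSpace ℝ (Fin (d + 1))) 1)) (i : Fin d), |wpart θ i| ≤ 1 := fun θ i =>
    (abs_coord_le_norm _ i).trans (hwnorm θ)
  have hℓabs : ∀ (θ : (Metric.sphere (0 : EuclideanSpace ℝ (Fin (d + 1))) 1)) (x : (EuclideanSpace ℝ (Fin d))), |ℓ θ x| ≤ ‖x‖ + 1 := by
    intro θ x
    simp only [hℓ]
    refine (abs_add_le _ _).trans ?_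
    have h1 : |⟪wpart θ, x⟫| ≤ ‖wpart θ‖ * ‖x‖ := abs_real_inner_le_norm _ _
    have h2 : |θ.1 (Fin.last d)| ≤ 1 := (abs_coord_le_norm θ.1 _).trans (hθnorm θ).le
    have h3 : ‖wpart θ‖ * ‖x‖ ≤ 1 * ‖x‖ :=
      mul_le_mul_of_nonneg_right (hwnorm θ) (norm_nonneg x)
    nlinarith [norm_nonneg x]
  have hmaxle : ∀ (θ : (Metric.sphere (0 : EuclideanSpace ℝ (Fin (d + 1))) 1)) (x : (EuclideanSpace ℝ (Fin d))), max (ℓ θ x) 0 ≤ ‖x‖ + 1 := fun θ x =>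
    max_le ((le_abs_self _).trans (hℓabs θ x)) (by positivity)
  set Ψ : (Metric.sphere (0 : EuclideanSpace ℝ (Fin (d + 1))) 1) → ℝ := fun θ => ∑ i, ∑ j ∈ univ.filter (fun j : Fin d => i < j), |ψ i j θ| with hΨ
  have hΨnn : ∀ θ, 0 ≤ Ψ θ := fun θ =>
    Finset.sum_nonneg fun i _ => Finset.sum_nonneg fun j _ => abs_nonneg _
  have hΨint : Integrable Ψ μ := by
    refine integrable_finset_sum _ fun i _ => integrable_finset_sum _ fun j hj => ?_
    exact ((hψ i j (Finset.mem_filter.mp hj).2).integrable (by norm_num)).abs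
  have hcnorm : ∀ θ : (Metric.sphere (0 : EuclideanSpace ℝ (Fin (d + 1))) 1), ‖c θ‖ ≤ 2 * Ψ θ := by
    intro θ
    simp only [hc, hΨ]
    have h1 : ∀ i j : Fin d, ‖ψ i j θ • (wpart θ j • EuclideanSpace.single i (1 : ℝ) -
        wpart θ i • EuclideanSpace.single j (1 : ℝ))‖ ≤ |ψ i j θ| * 2 := by
      intro i j
      rw [norm_smul, Real.norm_eq_abs]
      have h2 : ‖wpart θ j • EuclideanSpace.single i (1 : ℝ) -
          wpart θ i • EuclideanSpace.single j (1 : ℝ)‖ ≤ 2 := by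
        refine (norm_sub_le _ _).trans ?_
        rw [norm_smul, norm_smul, EuclideanSpace.norm_single, EuclideanSpace.norm_single]
        have := hwabs θ i
        have := hwabs θ j
        simp only [Real.norm_eq_abs, norm_one, mul_one]
        linarith
      exact mul_le_mul_of_nonneg_left h2 (abs_nonneg _)
    calc ‖∑ i, ∑ j ∈ univ.filter (fun j : Fin d => i < j),
          ψ i j θ • (wpart θ j • EuclideanSpace.single i (1 : ℝ) -
            wpart θ i • EuclideanSpace.single j (1 : ℝ))‖
        ≤ ∑ i, ∑ j ∈ univ.filter (fun j : Fin d => i < j), |ψ i j θ| * 2 :=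
          (norm_sum_le _ _).trans (Finset.sum_le_sum fun i _ =>
            (norm_sum_le _ _).trans (Finset.sum_le_sum fun j _ => h1 i j))
      _ = 2 * ∑ i, ∑ j ∈ univ.filter (fun j : Fin d => i < j), |ψ i j θ| := by
          rw [Finset.mul_sum]
          refine Finset.sum_congr rfl fun i _ => ?_
          rw [Finset.mul_sum]
          exact Finset.sum_congr rfl fun j _ => by ring
  -- measurability in θ
  have hWcont : Continuous fun θ : (Metric.sphere (0 : EuclideanSpace ℝ (Fin (d + 1))) 1) => wpart θ := by
    have h : Continuous fun θ : (Metric.sphere (0 : EuclideanSpace ℝ (Fin (d + 1))) 1) => (fun i : Fin d => θ.1 (Fin.castSucc i)) :=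
      continuous_pi fun i =>
        ((EuclideanSpace.proj (Fin.castSucc i)).continuous).comp continuous_subtype_val
    have heq : (fun θ : (Metric.sphere (0 : EuclideanSpace ℝ (Fin (d + 1))) 1) => wpart θ) =
        fun θ => (EuclideanSpace.equiv (Fin d) ℝ).symm fun i => θ.1 (Fin.castSucc i) := by
      funext θ
      ext i
      rw [hwpart]
      rfl
    rw [heq]
    exact (EuclideanSpace.equiv (Fin d) ℝ).symm.continuous.comp h
  have hbcont : Continuous fun θ : (Metric.sphere (0 : EuclideanSpace ℝ (Fin (d + 1))) 1) => (θ.1 (Fin.last d) : ℝ) :=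
    ((EuclideanSpace.proj (Fin.last d)).continuous).comp continuous_subtype_val
  have hℓcont : ∀ x : (EuclideanSpace ℝ (Fin d)), Continuous fun θ : (Metric.sphere (0 : EuclideanSpace ℝ (Fin (d + 1))) 1) => ℓ θ x := fun x => by
    exact ((hWcont.inner continuous_const)).add hbcont
  have hcmeas : AEStronglyMeasurable c μ := by
    rw [hc]
    refine Finset.aestronglyMeasurable_fun_sum _ fun i _ =>
      Finset.aestronglyMeasurable_fun_sum _ fun j hj => ?_
    have hvj : Continuous fun θ : (Metric.sphere (0 : EuclideanSpace ℝ (Fin (d + 1))) 1) => wpart θ j • EuclideanSpace.single i (1 : ℝ) -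
        wpart θ i • EuclideanSpace.single j (1 : ℝ) :=
      ((((EuclideanSpace.proj j).continuous).comp hWcont).smul continuous_const).sub
        ((((EuclideanSpace.proj i).continuous).comp hWcont).smul continuous_const)
    exact ((hψ i j (Finset.mem_filter.mp hj).2).aestronglyMeasurable).smul
      hvj.aestronglyMeasurable
  have hFmeas : ∀ x : (EuclideanSpace ℝ (Fin d)), AEStronglyMeasurable (fun θ => F θ x) μ := fun x => by
    exact ((continuous_const.mul (((hℓcont x).max continuous_const).pow _)).aestronglyMeasurable).smul hcmeas
  have hFint : ∀ x : (EuclideanSpace ℝ (Fin d)), Integrable (fun θ => F θ x) μ := by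
    intro x
    refine Integrable.mono' (((hΨint.const_mul 2).const_mul
      ((k : ℝ) * (‖x‖ + 1) ^ (k - 1)))) (hFmeas x)
      (Filter.Eventually.of_forall fun θ => ?_)
    simp only [hF]
    rw [norm_smul]
    have h1 : ‖(k : ℝ) * max (ℓ θ x) 0 ^ (k - 1)‖ ≤ (k : ℝ) * (‖x‖ + 1) ^ (k - 1) := by
      rw [Real.norm_eq_abs, abs_mul, Nat.abs_cast, abs_pow,
        abs_of_nonneg (le_max_right _ _)]
      exact mul_le_mul_of_nonneg_left
        (pow_le_pow_left₀ (le_max_right _ _) (hmaxle θ x) _) (by positivity)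
    calc ‖(k : ℝ) * max (ℓ θ x) 0 ^ (k - 1)‖ * ‖c θ‖
        ≤ ((k : ℝ) * (‖x‖ + 1) ^ (k - 1)) * (2 * Ψ θ) :=
          mul_le_mul h1 (hcnorm θ) (norm_nonneg _) (by positivity)
      _ = (k : ℝ) * (‖x‖ + 1) ^ (k - 1) * (2 * Ψ θ) := by ring
  -- derivative data
  set M : (Metric.sphere (0 : EuclideanSpace ℝ (Fin (d + 1))) 1) → ((EuclideanSpace ℝ (Fin d)) →L[ℝ] (EuclideanSpace ℝ (Fin d))) := fun θ => (innerSL ℝ (wpart θ)).smulRight (c θ) with hM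
  set F' : (Metric.sphere (0 : EuclideanSpace ℝ (Fin (d + 1))) 1) → (EuclideanSpace ℝ (Fin d)) → ((EuclideanSpace ℝ (Fin d)) →L[ℝ] (EuclideanSpace ℝ (Fin d))) := fun θ x =>
      ((k : ℝ) * ((n + 1 : ℝ) * max (ℓ θ x) 0 ^ n)) • M θ with hF'
  have hMnorm : ∀ θ, ‖M θ‖ ≤ ‖c θ‖ := by
    intro θ
    simp only [hM]
    rw [ContinuousLinearMap.norm_smulRight_apply, innerSL_apply_norm]
    exact mul_le_of_le_one_left (norm_nonneg _) (hwnorm θ)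
  have hF'norm : ∀ (θ : (Metric.sphere (0 : EuclideanSpace ℝ (Fin (d + 1))) 1)) (x : (EuclideanSpace ℝ (Fin d))), ‖F' θ x‖ ≤ (k : ℝ) * (n + 1) * (‖x‖ + 1) ^ n * (2 * Ψ θ) := by
    intro θ x
    simp only [hF']
    rw [norm_smul ((k : ℝ) * ((n + 1 : ℝ) * max (ℓ θ x) 0 ^ n)) (M θ)]
    have h1 : ‖(k : ℝ) * ((n + 1 : ℝ) * max (ℓ θ x) 0 ^ n)‖ ≤
        (k : ℝ) * (n + 1) * (‖x‖ + 1) ^ n := by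
      rw [Real.norm_eq_abs, abs_mul, Nat.abs_cast, abs_mul, abs_pow,
        abs_of_nonneg (le_max_right (ℓ θ x) 0), abs_of_nonneg
        (by positivity : (0:ℝ) ≤ (n : ℝ) + 1), ← mul_assoc]
      exact mul_le_mul_of_nonneg_left
        (pow_le_pow_left₀ (le_max_right _ _) (hmaxle θ x) _) (by positivity)
    have h2 : ‖M θ‖ ≤ 2 * Ψ θ := (hMnorm θ).trans (hcnorm θ)
    exact mul_le_mul h1 h2 (norm_nonneg _) (by positivity)
  have hderiv : ∀ (θ : (Metric.sphere (0 : EuclideanSpace ℝ (Fin (d + 1))) 1)) (x : (EuclideanSpace ℝ (Fin d))), HasFDerivAt (fun y => F θ y) (F' θ x) x := by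
    intro θ x
    have h1 : HasDerivAt (fun s : ℝ => max s 0 ^ (n + 1))
        ((n + 1 : ℝ) * max (ℓ θ x) 0 ^ n) (ℓ θ x) := hasDerivAt_relupow n hn1 _
    have h2 : HasFDerivAt (fun y : (EuclideanSpace ℝ (Fin d)) => ℓ θ y) (innerSL ℝ (wpart θ)) x := by
      have h2' := ((innerSL ℝ (wpart θ)).hasFDerivAt (x := x)).add_const (θ.1 (Fin.last d))
      exact h2'
    have h3 := h1.comp_hasFDerivAt x h2
    have h4 := (h3.smul_const (c θ)).const_smul ((k : ℝ))
    have he : (fun y => F θ y) = fun y => (k : ℝ) • (max (ℓ θ y) 0 ^ (n + 1) • c θ) := by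
      funext y
      simp only [hF, hk1, mul_smul]
    rw [he]
    refine (show HasFDerivAt (fun y => (k : ℝ) • (max (ℓ θ y) 0 ^ (n + 1) • c θ)) _ x from h4).congr_fderiv ?_
    simp only [hF', hM]
    ext v
    simp only [ContinuousLinearMap.smul_apply, ContinuousLinearMap.smulRight_apply,
      ContinuousLinearMap.coe_smul', Pi.smul_apply, smul_smul, smul_eq_mul]
    ring_nf
  have hMmeas : AEStronglyMeasurable M μ := by
    have hL : Continuous fun θ : (Metric.sphere (0 : EuclideanSpace ℝ (Fin (d + 1))) 1) => innerSL ℝ (wpart θ) :=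
      (innerSL ℝ (E := EuclideanSpace ℝ (Fin d))).continuous.comp hWcont
    have := isBoundedBilinearMap_apply.continuous.comp_aestronglyMeasurable
      (((ContinuousLinearMap.smulRightL ℝ (EuclideanSpace ℝ (Fin d)) (EuclideanSpace ℝ (Fin d))).continuous.comp
        hL).aestronglyMeasurable.prodMk hcmeas)
    exact this
  have hF'meas : ∀ x : (EuclideanSpace ℝ (Fin d)), AEStronglyMeasurable (fun θ => F' θ x) μ := by
    intro x
    have h1 : Continuous fun θ : (Metric.sphere (0 : EuclideanSpace ℝ (Fin (d + 1))) 1) => (k : ℝ) * ((n + 1 : ℝ) * max (ℓ θ x) 0 ^ n) :=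
      continuous_const.mul (continuous_const.mul (((hℓcont x).max continuous_const).pow n))
    exact h1.aestronglyMeasurable.smul hMmeas
  have hF'contx : ∀ θ : (Metric.sphere (0 : EuclideanSpace ℝ (Fin (d + 1))) 1), Continuous fun x : (EuclideanSpace ℝ (Fin d)) => F' θ x := by
    intro θ
    have hℓx : Continuous fun x : (EuclideanSpace ℝ (Fin d)) => ℓ θ x := by
      simp only [hℓ]
      exact (continuous_const.inner continuous_id).add continuous_const
    exact (continuous_const.mul (continuous_const.mul
      ((hℓx.max continuous_const).pow n))).smul continuous_const
  -- the bound for dominated results, around a point x₀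
  have hbound_int : ∀ R : ℝ, Integrable (fun θ => (k : ℝ) * (n + 1) * R ^ n * (2 * Ψ θ)) μ := by
    intro R
    exact (hΨint.const_mul 2).const_mul _
  have key : ∀ x₀ : (EuclideanSpace ℝ (Fin d)), HasFDerivAt (fun x => ∫ θ, F θ x ∂μ) (∫ θ, F' θ x₀ ∂μ) x₀ := by
    intro x₀
    apply hasFDerivAt_integral_of_dominated_of_fderiv_le (𝕜 := ℝ) (H := (EuclideanSpace ℝ (Fin d))) (α := (Metric.sphere (0 : EuclideanSpace ℝ (Fin (d + 1))) 1)) (μ := μ) (F := fun x θ => F θ x) (F' := fun x θ => F' θ x) (x₀ := x₀) (s := Metric.ball x₀ 1) (Metric.ball_mem_nhds x₀ one_pos)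
      (Filter.Eventually.of_forall fun x => hFmeas x) (hFint x₀) (hF'meas x₀)
      (bound := fun θ => (k : ℝ) * (n + 1) * (‖x₀‖ + 2) ^ n * (2 * Ψ θ))
      ?_ (hbound_int (‖x₀‖ + 2)) ?_
    · refine Filter.Eventually.of_forall fun θ x hx => ?_
      refine (hF'norm θ x).trans ?_
      have hxl : ‖x‖ + 1 ≤ ‖x₀‖ + 2 := by
        have h := mem_ball_iff_norm.mp hx
        have h2 := norm_sub_norm_le x x₀
        linarith
      have h3 : (‖x‖ + 1) ^ n ≤ (‖x₀‖ + 2) ^ n :=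
        pow_le_pow_left₀ (by positivity) hxl n
      have h4 : (0:ℝ) ≤ 2 * Ψ θ := by have := hΨnn θ; linarith
      exact mul_le_mul_of_nonneg_right
        (mul_le_mul_of_nonneg_left h3 (by positivity)) h4
    · exact Filter.Eventually.of_forall fun θ x _ => hderiv θ x
  have hueq : u = fun x => ∫ θ, F θ x ∂μ := funext hu'
  have hudiff : Differentiable ℝ u := by
    intro x; rw [hueq]; exact (key x).differentiableAt
  have hufderiv : ∀ x, fderiv ℝ u x = ∫ θ, F' θ x ∂μ := by
    intro x; rw [hueq]; exact (key x).fderiv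
  have hcont : Continuous fun x => ∫ θ, F' θ x ∂μ := by
    rw [continuous_iff_continuousAt]
    intro x₀
    apply continuousAt_of_dominated (Filter.Eventually.of_forall fun x => hF'meas x)
      (bound := fun θ => (k : ℝ) * (n + 1) * (‖x₀‖ + 2) ^ n * (2 * Ψ θ))
      ?_ (hbound_int (‖x₀‖ + 2)) (Filter.Eventually.of_forall fun θ => (hF'contx θ).continuousAt)
    · refine Filter.eventually_of_mem (Metric.ball_mem_nhds x₀ one_pos) fun x hx =>
        Filter.Eventually.of_forall fun θ => ?_
      refine (hF'norm θ x).trans ?_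
      have hxl : ‖x‖ + 1 ≤ ‖x₀‖ + 2 := by
        have h := mem_ball_iff_norm.mp hx
        have h2 := norm_sub_norm_le x x₀
        linarith
      have h3 : (‖x‖ + 1) ^ n ≤ (‖x₀‖ + 2) ^ n :=
        pow_le_pow_left₀ (by positivity) hxl n
      have h4 : (0:ℝ) ≤ 2 * Ψ θ := by have := hΨnn θ; linarith
      exact mul_le_mul_of_nonneg_right
        (mul_le_mul_of_nonneg_left h3 (by positivity)) h4
  constructor
  · rw [contDiff_one_iff_fderiv]
    refine ⟨hudiff, ?_⟩
    have : fderiv ℝ u = fun x => ∫ θ, F' θ x ∂μ := funext hufderiv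
    rw [this]; exact hcont
  · intro x
    have hIntF' : Integrable (fun θ => F' θ x) μ := by
      refine Integrable.mono' ?_ (hF'meas x) (Filter.Eventually.of_forall fun θ => hF'norm θ x)
      exact hbound_int (‖x‖ + 1)
    have hD : fderiv ℝ u x = ∫ θ, F' θ x ∂μ := hufderiv x
    have hproj : ∀ p : Fin d, fderiv ℝ (fun y => u y p) x =
        (EuclideanSpace.proj p).comp (fderiv ℝ u x) := by
      intro p
      have h1 : HasFDerivAt u (fderiv ℝ u x) x := (hudiff x).hasFDerivAt
      exact ((EuclideanSpace.proj p).hasFDerivAt.comp x h1).fderiv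
    have hwc : ∀ θ : (Metric.sphere (0 : EuclideanSpace ℝ (Fin (d + 1))) 1), ∑ p, wpart θ p * c θ p = 0 := by
      intro θ
      have hinner : ∑ p, wpart θ p * c θ p = ⟪wpart θ, c θ⟫ := by
        rw [PiLp.inner_apply]
        simp [RCLike.inner_apply, conj_trivial]
        exact Finset.sum_congr rfl fun i _ => mul_comm _ _
      rw [hinner]
      simp only [hc]
      rw [inner_sum]
      refine Finset.sum_eq_zero fun i _ => ?_
      rw [inner_sum]
      refine Finset.sum_eq_zero fun j _ => ?_
      rw [real_inner_smul_right, inner_sub_right, real_inner_smul_right,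
        real_inner_smul_right, EuclideanSpace.inner_single_right,
        EuclideanSpace.inner_single_right]
      simp only [conj_trivial]
      ring
    have hzero : ∀ θ : (Metric.sphere (0 : EuclideanSpace ℝ (Fin (d + 1))) 1), ∑ p, (F' θ x (EuclideanSpace.single p 1)) p = 0 := by
      intro θ
      have happ : ∀ p : Fin d, (F' θ x (EuclideanSpace.single p 1)) p =
          ((k : ℝ) * ((n + 1 : ℝ) * max (ℓ θ x) 0 ^ n)) * (wpart θ p * c θ p) := by
        intro p
        simp only [hF', hM]
        simp only [ContinuousLinearMap.smul_apply, ContinuousLinearMap.smulRight_apply,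
          innerSL_apply_apply, PiLp.smul_apply, smul_eq_mul, EuclideanSpace.inner_single_right,
          conj_trivial, one_mul]
        try ring
      simp only [happ]
      rw [← Finset.mul_sum, hwc θ, mul_zero]
    have step : ∀ p : Fin d, fderiv ℝ (fun y => u y p) x (EuclideanSpace.single p 1) =
        ∫ θ, (F' θ x (EuclideanSpace.single p 1)) p ∂μ := by
      intro p
      rw [hproj p, ContinuousLinearMap.comp_apply, hD,
        ContinuousLinearMap.integral_apply hIntF',
        ← (EuclideanSpace.proj p).integral_comp_comm
          (hIntF'.apply_continuousLinearMap _)]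
      rfl
    rw [Finset.sum_congr rfl fun p _ => step p, ← integral_finset_sum]
    · simp only [hzero, integral_zero]
    · intro p _
      exact ContinuousLinearMap.integrable_comp (𝕜 := ℝ)
        (EuclideanSpace.proj (𝕜 := ℝ) p) (hIntF'.apply_continuousLinearMap _)
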